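/- Let L ≥ 1 and let d₀, d₁, …, d_L be positive integers with d_L = K. For p = 1,…,L let W⁽ᵖ⁾ ∈ ℝ^{d_p × d_{p−1}}, let x = x⁽¹⁾ ∈ ℝ^{d₀}, define z⁽ᵖ⁾ = W⁽ᵖ⁾x⁽ᵖ⁾ and x⁽ᵖ⁺¹⁾ = D⁽ᵖ⁾z⁽ᵖ⁾ with D⁽ᵖ⁾ = diag(𝟙[z⁽ᵖ⁾ ≥ 0]). Set G⁽ᴸ⁾ = I_K and G⁽ᵖ⁾ = W⁽ᴸ⁾D⁽ᴸ⁻¹⁾W⁽ᴸ⁻¹⁾⋯W⁽ᵖ⁺¹⁾D⁽ᵖ⁾ for p < L, and let F be the matrix with K rows whose transpose Fᵀ stacks vertically, for p = 1,…,L, the blocks (G⁽ᵖ⁾)ᵀ ⊗ x⁽ᵖ⁾ and (G⁽ᵖ⁾)ᵀ. Let p ∈ ℝ^K be a probability vector and A = diag(p) − ppᵀ. Then ‖FᵀAF‖₂ ≤ √2 · ∑_{p=1}^{L} (‖x⁽ᵖ⁾‖₂² + 1) · ∏_{s=p+1}^{L} ‖W⁽ˢ⁾‖₂². -/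

import Mathlib

open Matrix BigOperators

/-- The spectral norm (ℓ² operator norm) of a real matrix. -/
noncomputable def l2SpectralNorm {m n : Type*} [Fintype m] [Fintype n] [DecidableEq n]
    (A : Matrix m n ℝ) : ℝ :=
  ‖LinearMap.toContinuousLinearMap (Matrix.toEuclideanLin A)‖

/-- The Euclidean norm of a real vector. -/
noncomputable def eNorm {n : Type*} [Fintype n] (x : n → ℝ) : ℝ :=
  Real.sqrt (∑ i, x i ^ 2)

open scoped Matrix.Norms.L2Operator

section Helpers

variable {m n l : Type*} [Fintype m] [Fintype n] [Fintype l] [DecidableEq n] [DecidableEq l]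

lemma l2SpectralNorm_eq_l2 (A : Matrix m n ℝ) : l2SpectralNorm A = ‖A‖ := rfl

lemma l2SpectralNorm_nonneg (A : Matrix m n ℝ) : 0 ≤ l2SpectralNorm A := norm_nonneg _

omit [DecidableEq n] in
lemma enorm_symm (v : n → ℝ) :
    ‖(WithLp.equiv 2 (n → ℝ)).symm v‖ = Real.sqrt (∑ i, v i ^ 2) := by
  rw [EuclideanSpace.norm_eq]
  congr 1
  refine Finset.sum_congr rfl fun i _ => ?_
  rw [WithLp.equiv_symm_apply, Real.norm_eq_abs, sq_abs]

omit [DecidableEq n] in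
lemma enorm_apply (x : EuclideanSpace ℝ n) :
    ‖x‖ = Real.sqrt (∑ i, ((WithLp.equiv 2 (n → ℝ)) x) i ^ 2) := by
  rw [EuclideanSpace.norm_eq]
  congr 1
  refine Finset.sum_congr rfl fun i _ => ?_
  rw [Real.norm_eq_abs, sq_abs]
  rfl

lemma sq_sum_mulVec_le (A : Matrix m n ℝ) (v : n → ℝ) :
    ∑ i, (A.mulVec v i) ^ 2 ≤ l2SpectralNorm A ^ 2 * ∑ j, v j ^ 2 := by
  have h := (LinearMap.toContinuousLinearMap (Matrix.toEuclideanLin A)).le_opNorm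
      ((WithLp.equiv 2 (n → ℝ)).symm v)
  have e1 : LinearMap.toContinuousLinearMap (Matrix.toEuclideanLin A)
      ((WithLp.equiv 2 (n → ℝ)).symm v)
      = (WithLp.equiv 2 (m → ℝ)).symm (A.mulVec v) := rfl
  rw [e1, enorm_symm, enorm_symm] at h
  have h2 := pow_le_pow_left₀ (Real.sqrt_nonneg _) h 2
  rw [Real.sq_sqrt (by positivity), mul_pow, Real.sq_sqrt (by positivity)] at h2
  exact h2

lemma l2SpectralNorm_le_of_bound (A : Matrix m n ℝ) (c : ℝ) (hc : 0 ≤ c)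
    (h : ∀ v : n → ℝ, ∑ i, (A.mulVec v i) ^ 2 ≤ c ^ 2 * ∑ j, v j ^ 2) :
    l2SpectralNorm A ≤ c := by
  refine ContinuousLinearMap.opNorm_le_bound _ hc fun x => ?_
  have e1 : LinearMap.toContinuousLinearMap (Matrix.toEuclideanLin A) x
      = (WithLp.equiv 2 (m → ℝ)).symm (A.mulVec ((WithLp.equiv 2 (n → ℝ)) x)) := rfl
  rw [e1, enorm_symm, enorm_apply x]
  have := h ((WithLp.equiv 2 (n → ℝ)) x)
  calc Real.sqrt (∑ i, A.mulVec ((WithLp.equiv 2 (n → ℝ)) x) i ^ 2)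
      ≤ Real.sqrt (c ^ 2 * ∑ j, ((WithLp.equiv 2 (n → ℝ)) x) j ^ 2) := Real.sqrt_le_sqrt this
    _ = c * Real.sqrt (∑ j, ((WithLp.equiv 2 (n → ℝ)) x) j ^ 2) := by
        rw [Real.sqrt_mul (sq_nonneg c), Real.sqrt_sq hc]

lemma l2SpectralNorm_le_frobenius (A : Matrix m n ℝ) :
    l2SpectralNorm A ≤ Real.sqrt (∑ i, ∑ j, A i j ^ 2) := by
  refine l2SpectralNorm_le_of_bound _ _ (Real.sqrt_nonneg _) fun v => ?_
  rw [Real.sq_sqrt (by positivity), Finset.sum_mul]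
  refine Finset.sum_le_sum fun i _ => ?_
  have : A.mulVec v i = ∑ j, A i j * v j := rfl
  rw [this]
  exact Finset.sum_mul_sq_le_sq_mul_sq _ _ _

lemma l2SpectralNorm_diagonal_le [DecidableEq m] (f : m → ℝ) (c : ℝ) (hc : 0 ≤ c)
    (h : ∀ i, |f i| ≤ c) : l2SpectralNorm (Matrix.diagonal f) ≤ c := by
  refine l2SpectralNorm_le_of_bound _ _ hc fun v => ?_
  rw [Finset.mul_sum]
  refine Finset.sum_le_sum fun i _ => ?_
  rw [Matrix.mulVec_diagonal]
  have h1 : f i ^ 2 ≤ c ^ 2 := by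
    rw [← sq_abs]
    exact pow_le_pow_left₀ (abs_nonneg _) (h i) 2
  calc (f i * v i) ^ 2 = f i ^ 2 * v i ^ 2 := by ring
    _ ≤ c ^ 2 * v i ^ 2 := mul_le_mul_of_nonneg_right h1 (sq_nonneg _)

lemma l2SpectralNorm_one_le [DecidableEq m] : l2SpectralNorm (1 : Matrix m m ℝ) ≤ 1 := by
  rw [← Matrix.diagonal_one]
  exact l2SpectralNorm_diagonal_le _ _ zero_le_one (fun i => by simp)

lemma l2SpectralNorm_mul_le [DecidableEq m] (A : Matrix m n ℝ) (B : Matrix n l ℝ) :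
    l2SpectralNorm (A * B) ≤ l2SpectralNorm A * l2SpectralNorm B :=
  Matrix.l2_opNorm_mul A B

lemma l2SpectralNorm_transpose [DecidableEq m] (A : Matrix m n ℝ) :
    l2SpectralNorm Aᵀ = l2SpectralNorm A := by
  have h : Aᵀ = Aᴴ := by
    ext i j
    simp [Matrix.conjTranspose_apply]
  rw [l2SpectralNorm_eq_l2, l2SpectralNorm_eq_l2, h]
  exact Matrix.l2_opNorm_conjTranspose A

end Helpers

/-- **Main intermediate inequality of Theorem 1.**  With the same setup and
indexing conventions as in Theorem 1 (`W q` is the paper's `W⁽q⁺¹⁾`, `xv q` the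
paper's `x⁽q⁺¹⁾`, `zv q` the paper's `z⁽q⁺¹⁾`, `Dm q` the paper's `D⁽q⁺¹⁾`,
`G q` the paper's `G⁽q⁾`, and `Ft` the paper's `Fᵀ`), the G-term Hessian
approximation satisfies
`‖Fᵀ A F‖₂ ≤ √2 ∑_{p=1}^{L} (‖x⁽ᵖ⁾‖₂² + 1) ∏_{s=p+1}^{L} ‖W⁽ˢ⁾‖₂²`
(paper sum index `p = ℓ+1` for Lean `ℓ ∈ range L`; paper product index
`s` corresponds to Lean `s - 1 ∈ Ico (ℓ+1) L`). -/
theorem spectral_norm_G_term_hessian_blockwise_bound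
    (L : ℕ) (hL : 1 ≤ L)
    (d : ℕ → ℕ) (hd : ∀ q ≤ L, 0 < d q)
    (W : (q : ℕ) → Matrix (Fin (d (q + 1))) (Fin (d q)) ℝ)
    (xv : (q : ℕ) → Fin (d q) → ℝ)
    (zv : (q : ℕ) → Fin (d (q + 1)) → ℝ)
    (hz : ∀ q < L, zv q = (W q).mulVec (xv q))
    (Dm : (q : ℕ) → Matrix (Fin (d (q + 1))) (Fin (d (q + 1))) ℝ)
    (hD : ∀ q < L, Dm q = Matrix.diagonal fun i => if 0 ≤ zv q i then (1 : ℝ) else 0)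
    (hxrec : ∀ q < L, xv (q + 1) = (Dm q).mulVec (zv q))
    (G : (q : ℕ) → Matrix (Fin (d L)) (Fin (d q)) ℝ)
    (hGL : G L = 1)
    (hG : ∀ q, q + 1 < L → G (q + 1) = G (q + 2) * W (q + 1) * Dm q)
    (Ft : Matrix ((ℓ : Fin L) × ((Fin (d (ℓ.1 + 1)) × Fin (d ℓ.1)) ⊕ Fin (d (ℓ.1 + 1))))
      (Fin (d L)) ℝ)
    (hFt1 : ∀ (ℓ : Fin L) (i : Fin (d (ℓ.1 + 1))) (a : Fin (d ℓ.1)) (j : Fin (d L)),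
      Ft ⟨ℓ, Sum.inl (i, a)⟩ j = (G (ℓ.1 + 1))ᵀ i j * xv ℓ.1 a)
    (hFt2 : ∀ (ℓ : Fin L) (i : Fin (d (ℓ.1 + 1))) (j : Fin (d L)),
      Ft ⟨ℓ, Sum.inr i⟩ j = (G (ℓ.1 + 1))ᵀ i j)
    (pv : Fin (d L) → ℝ) (hpv : ∀ j, 0 ≤ pv j) (hpsum : ∑ j, pv j = 1) :
    l2SpectralNorm (Ft * (Matrix.diagonal pv - Matrix.vecMulVec pv pv) * Ftᵀ) ≤
      Real.sqrt 2 * ∑ ℓ ∈ Finset.range L,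
        (eNorm (xv ℓ) ^ 2 + 1) * ∏ s ∈ Finset.Ico (ℓ + 1) L, l2SpectralNorm (W s) ^ 2 := by
  classical
  set A : Matrix (Fin (d L)) (Fin (d L)) ℝ :=
    Matrix.diagonal pv - Matrix.vecMulVec pv pv with hA
  -- basic facts about pv
  have hple : ∀ j, pv j ≤ 1 := by
    intro j
    rw [← hpsum]
    exact Finset.single_le_sum (fun i _ => hpv i) (Finset.mem_univ j)
  have hsq : ∑ j, pv j ^ 2 ≤ 1 := by
    rw [← hpsum]
    exact Finset.sum_le_sum fun i _ => by nlinarith [hpv i, hple i]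
  have hsqnn : (0:ℝ) ≤ ∑ j, pv j ^ 2 := Finset.sum_nonneg fun i _ => sq_nonneg _
  -- ‖A‖ ≤ √2
  have hAle : l2SpectralNorm A ≤ Real.sqrt 2 := by
    refine (l2SpectralNorm_le_frobenius A).trans (Real.sqrt_le_sqrt ?_)
    have key : ∀ i j, A i j ^ 2 ≤ (if i = j then pv i ^ 2 else 0) + pv i ^ 2 * pv j ^ 2 := by
      intro i j
      by_cases h : i = j
      · subst h
        simp only [hA, Matrix.sub_apply, Matrix.diagonal_apply_eq, Matrix.vecMulVec_apply,
          if_pos rfl, if_true]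
        nlinarith [hpv i, hple i]
      · simp only [hA, Matrix.sub_apply, Matrix.diagonal_apply_ne _ h, Matrix.vecMulVec_apply,
          if_neg h]
        nlinarith [sq_nonneg (pv i * pv j)]
    calc ∑ i, ∑ j, A i j ^ 2
        ≤ ∑ i, ∑ j, ((if i = j then pv i ^ 2 else 0) + pv i ^ 2 * pv j ^ 2) :=
          Finset.sum_le_sum fun i _ => Finset.sum_le_sum fun j _ => key i j
      _ = (∑ j, pv j ^ 2) + (∑ j, pv j ^ 2) * (∑ j, pv j ^ 2) := by
          simp [Finset.sum_add_distrib, Finset.sum_ite_eq, ← Finset.mul_sum, ← Finset.sum_mul]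
      _ ≤ 2 := by nlinarith
  -- ‖G q‖ bound
  have hGb : ∀ k ℓ, ℓ + 1 + k = L →
      l2SpectralNorm (G (ℓ + 1)) ≤ ∏ s ∈ Finset.Ico (ℓ + 1) L, l2SpectralNorm (W s) := by
    intro k
    induction k with
    | zero =>
      intro ℓ hk
      have hLe : L = ℓ + 1 := by omega
      subst hLe
      rw [hGL, Finset.Ico_self, Finset.prod_empty]
      exact l2SpectralNorm_one_le
    | succ k ih =>
      intro ℓ hk
      have h1 : ℓ + 1 < L := by omega
      have hDle : l2SpectralNorm (Dm ℓ) ≤ 1 := by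
        rw [hD ℓ (by omega)]
        refine l2SpectralNorm_diagonal_le _ _ zero_le_one fun i => ?_
        split_ifs <;> simp
      have h2 := ih (ℓ + 1) (by omega)
      rw [hG ℓ h1]
      calc l2SpectralNorm (G (ℓ + 2) * W (ℓ + 1) * Dm ℓ)
          ≤ l2SpectralNorm (G (ℓ + 2) * W (ℓ + 1)) * l2SpectralNorm (Dm ℓ) :=
            l2SpectralNorm_mul_le _ _
        _ ≤ l2SpectralNorm (G (ℓ + 2)) * l2SpectralNorm (W (ℓ + 1)) * 1 :=
            mul_le_mul (l2SpectralNorm_mul_le _ _) hDle (l2SpectralNorm_nonneg _)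
              (mul_nonneg (l2SpectralNorm_nonneg _) (l2SpectralNorm_nonneg _))
        _ = l2SpectralNorm (W (ℓ + 1)) * l2SpectralNorm (G (ℓ + 2)) := by ring
        _ ≤ l2SpectralNorm (W (ℓ + 1)) * ∏ s ∈ Finset.Ico (ℓ + 2) L, l2SpectralNorm (W s) :=
            mul_le_mul_of_nonneg_left h2 (l2SpectralNorm_nonneg _)
        _ = ∏ s ∈ Finset.Ico (ℓ + 1) L, l2SpectralNorm (W s) := by
            rw [Finset.prod_eq_prod_Ico_succ_bot h1 (fun s => l2SpectralNorm (W s))]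
  -- the block sum
  set SG : ℝ := ∑ ℓ ∈ Finset.range L,
    (eNorm (xv ℓ) ^ 2 + 1) * l2SpectralNorm (G (ℓ + 1)) ^ 2 with hSG
  have hterm_nn : ∀ ℓ : ℕ, (0:ℝ) ≤ (eNorm (xv ℓ) ^ 2 + 1) := fun ℓ => by positivity
  have hSGnn : 0 ≤ SG := Finset.sum_nonneg fun ℓ _ =>
    mul_nonneg (hterm_nn ℓ) (sq_nonneg _)
  -- ‖Ft‖ ≤ √SG
  have hFt : l2SpectralNorm Ft ≤ Real.sqrt SG := by
    refine l2SpectralNorm_le_of_bound _ _ (Real.sqrt_nonneg _) fun v => ?_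
    rw [Real.sq_sqrt hSGnn]
    have hrow1 : ∀ (ℓ : Fin L) (i : Fin (d (ℓ.1 + 1))) (a : Fin (d ℓ.1)),
        Ft.mulVec v ⟨ℓ, Sum.inl (i, a)⟩ = xv ℓ.1 a * ((G (ℓ.1 + 1))ᵀ.mulVec v i) := by
      intro ℓ i a
      show ∑ j, Ft ⟨ℓ, Sum.inl (i, a)⟩ j * v j = xv ℓ.1 a * ∑ j, (G (ℓ.1 + 1))ᵀ i j * v j
      rw [Finset.mul_sum]
      refine Finset.sum_congr rfl fun j _ => ?_
      rw [hFt1]; ring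
    have hrow2 : ∀ (ℓ : Fin L) (i : Fin (d (ℓ.1 + 1))),
        Ft.mulVec v ⟨ℓ, Sum.inr i⟩ = (G (ℓ.1 + 1))ᵀ.mulVec v i := by
      intro ℓ i
      show ∑ j, Ft ⟨ℓ, Sum.inr i⟩ j * v j = ∑ j, (G (ℓ.1 + 1))ᵀ i j * v j
      refine Finset.sum_congr rfl fun j _ => ?_
      rw [hFt2]
    -- split the sum over the sigma/sum index
    have hsplit : ∑ r, (Ft.mulVec v r) ^ 2
        = ∑ ℓ : Fin L, ((eNorm (xv ℓ.1) ^ 2 + 1) * ∑ i, ((G (ℓ.1 + 1))ᵀ.mulVec v i) ^ 2) := by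
      rw [← Finset.univ_sigma_univ, Finset.sum_sigma]
      refine Finset.sum_congr rfl fun ℓ _ => ?_
      rw [Fintype.sum_sum_type]
      have e1 : ∑ p : Fin (d (ℓ.1 + 1)) × Fin (d ℓ.1), (Ft.mulVec v ⟨ℓ, Sum.inl p⟩) ^ 2
          = (∑ a, xv ℓ.1 a ^ 2) * ∑ i, ((G (ℓ.1 + 1))ᵀ.mulVec v i) ^ 2 := by
        rw [Fintype.sum_prod_type, Finset.sum_comm, Finset.sum_mul]
        refine Finset.sum_congr rfl fun a _ => ?_
        rw [Finset.mul_sum]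
        refine Finset.sum_congr rfl fun i _ => ?_
        rw [hrow1]; ring
      have e2 : ∑ i, (Ft.mulVec v ⟨ℓ, Sum.inr i⟩) ^ 2
          = ∑ i, ((G (ℓ.1 + 1))ᵀ.mulVec v i) ^ 2 := by
        refine Finset.sum_congr rfl fun i _ => ?_
        rw [hrow2]
      have e3 : eNorm (xv ℓ.1) ^ 2 = ∑ a, xv ℓ.1 a ^ 2 := by
        rw [eNorm, Real.sq_sqrt (by positivity)]
      rw [e1, e2, e3]; ring
    rw [hsplit]
    have hstep : ∀ ℓ : Fin L,
        (eNorm (xv ℓ.1) ^ 2 + 1) * ∑ i, ((G (ℓ.1 + 1))ᵀ.mulVec v i) ^ 2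
          ≤ ((eNorm (xv ℓ.1) ^ 2 + 1) * l2SpectralNorm (G (ℓ.1 + 1)) ^ 2) * ∑ j, v j ^ 2 := by
      intro ℓ
      rw [mul_assoc]
      refine mul_le_mul_of_nonneg_left ?_ (hterm_nn ℓ.1)
      have := sq_sum_mulVec_le ((G (ℓ.1 + 1))ᵀ) v
      rwa [l2SpectralNorm_transpose] at this
    calc ∑ ℓ : Fin L, ((eNorm (xv ℓ.1) ^ 2 + 1) * ∑ i, ((G (ℓ.1 + 1))ᵀ.mulVec v i) ^ 2)
        ≤ ∑ ℓ : Fin L, ((eNorm (xv ℓ.1) ^ 2 + 1) * l2SpectralNorm (G (ℓ.1 + 1)) ^ 2) * ∑ j, v j ^ 2 :=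
          Finset.sum_le_sum fun ℓ _ => hstep ℓ
      _ = SG * ∑ j, v j ^ 2 := by
          rw [← Finset.sum_mul, hSG,
            ← Fin.sum_univ_eq_sum_range (fun ℓ => (eNorm (xv ℓ) ^ 2 + 1)
              * l2SpectralNorm (G (ℓ + 1)) ^ 2) L]
  -- SG ≤ the W-product sum
  have hSGle : SG ≤ ∑ ℓ ∈ Finset.range L,
      (eNorm (xv ℓ) ^ 2 + 1) * ∏ s ∈ Finset.Ico (ℓ + 1) L, l2SpectralNorm (W s) ^ 2 := by
    refine Finset.sum_le_sum fun ℓ hℓ => ?_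
    refine mul_le_mul_of_nonneg_left ?_ (hterm_nn ℓ)
    have hmem : ℓ < L := Finset.mem_range.mp hℓ
    have h1 := hGb (L - (ℓ + 1)) ℓ (by omega)
    calc l2SpectralNorm (G (ℓ + 1)) ^ 2
        ≤ (∏ s ∈ Finset.Ico (ℓ + 1) L, l2SpectralNorm (W s)) ^ 2 :=
          pow_le_pow_left₀ (l2SpectralNorm_nonneg _) h1 2
      _ = ∏ s ∈ Finset.Ico (ℓ + 1) L, l2SpectralNorm (W s) ^ 2 := by
          rw [← Finset.prod_pow]
  -- final chain
  have hFtnn := l2SpectralNorm_nonneg Ft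
  have hFt2' : l2SpectralNorm Ft * l2SpectralNorm Ft ≤ SG := by
    calc l2SpectralNorm Ft * l2SpectralNorm Ft ≤ Real.sqrt SG * Real.sqrt SG :=
          mul_le_mul hFt hFt hFtnn (Real.sqrt_nonneg _)
      _ = SG := Real.mul_self_sqrt hSGnn
  have hRHSnn : (0:ℝ) ≤ ∑ ℓ ∈ Finset.range L,
      (eNorm (xv ℓ) ^ 2 + 1) * ∏ s ∈ Finset.Ico (ℓ + 1) L, l2SpectralNorm (W s) ^ 2 :=
    hSGnn.trans hSGle
  calc l2SpectralNorm (Ft * A * Ftᵀ)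
      ≤ l2SpectralNorm (Ft * A) * l2SpectralNorm Ftᵀ := l2SpectralNorm_mul_le _ _
    _ ≤ (l2SpectralNorm Ft * l2SpectralNorm A) * l2SpectralNorm Ft := by
        rw [l2SpectralNorm_transpose]
        exact mul_le_mul_of_nonneg_right (l2SpectralNorm_mul_le _ _) hFtnn
    _ = l2SpectralNorm A * (l2SpectralNorm Ft * l2SpectralNorm Ft) := by ring
    _ ≤ Real.sqrt 2 * SG :=
        mul_le_mul hAle hFt2' (mul_nonneg hFtnn hFtnn) (Real.sqrt_nonneg _)
    _ ≤ Real.sqrt 2 * ∑ ℓ ∈ Finset.range L,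
          (eNorm (xv ℓ) ^ 2 + 1) * ∏ s ∈ Finset.Ico (ℓ + 1) L, l2SpectralNorm (W s) ^ 2 :=
        mul_le_mul_of_nonneg_left hSGle (Real.sqrt_nonneg _)
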